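/- arXiv:2205.15397 — 2 statements merged into one kernel-verified Lean document; each statement's English description precedes it below -/
import Mathlib

section
/- Let U be uniformly distributed on the unit hemisphere H = {x ∈ S^{d-1} : ⟨x, θ⟩ ≥ 0} for a fixed unit vector θ ∈ ℝ^d. Then for any η ≥ 0, Pr(⟨U, θ⟩ ≤ η) ≤ 2√d · η. -/
open MeasureTheory ProbabilityTheory RealInnerProductSpace Set Metric Real
open scoped Pointwise ENNReal

section aux

lemma gamma_step (a : ℝ) (ha : 0 < a) :
    Real.Gamma (a + 1/2) ≤ Real.sqrt a * Real.Gamma a := by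
  have ha1 : (0:ℝ) < a + 1 := by linarith
  have hGa : 0 < Gamma a := Gamma_pos_of_pos ha
  have hGa1 : 0 < Gamma (a+1) := Gamma_pos_of_pos ha1
  have hconv := convexOn_log_Gamma.2 (Set.mem_Ioi.2 ha) (Set.mem_Ioi.2 ha1)
    (by norm_num : (0:ℝ) ≤ 1/2) (by norm_num : (0:ℝ) ≤ 1/2) (by norm_num)
  have hmid : (1/2 : ℝ) • a + (1/2 : ℝ) • (a+1) = a + 1/2 := by
    simp [smul_eq_mul]; ring
  rw [hmid] at hconv
  simp only [Function.comp_apply, smul_eq_mul] at hconv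
  have h2 : Gamma (a + 1/2) ≤ Real.sqrt (Gamma a * Gamma (a+1)) := by
    have hpos : 0 < Gamma (a + 1/2) := Gamma_pos_of_pos (by linarith)
    have : Gamma (a + 1/2) = Real.exp (Real.log (Gamma (a + 1/2))) := (Real.exp_log hpos).symm
    rw [this]
    have hs : Real.sqrt (Gamma a * Gamma (a+1)) =
        Real.exp (1/2 * Real.log (Gamma a) + 1/2 * Real.log (Gamma (a+1))) := by
      rw [show (1/2 * Real.log (Gamma a) + 1/2 * Real.log (Gamma (a+1)))
          = Real.log (Gamma a * Gamma (a+1)) * (1/2) by rw [Real.log_mul hGa.ne' hGa1.ne']; ring,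
        ← Real.rpow_def_of_pos (by positivity)]
      exact Real.sqrt_eq_rpow _
    rw [hs]
    exact Real.exp_le_exp.2 hconv
  calc Gamma (a + 1/2) ≤ Real.sqrt (Gamma a * Gamma (a+1)) := h2
    _ = Real.sqrt a * Gamma a := by
        rw [Real.Gamma_add_one ha.ne', show Gamma a * (a * Gamma a) = a * (Gamma a)^2 by ring,
          Real.sqrt_mul ha.le, Real.sqrt_sq hGa.le]

lemma vol_ratio (m : ℕ) :
    sqrt π ^ m / Gamma (m / 2 + 1) ≤
      sqrt (m+1) * (sqrt π ^ (m+1) / Gamma ((m+1 : ℕ) / 2 + 1)) := by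
  have hm : (0:ℝ) < (m:ℝ)/2 + 1 := by positivity
  have h1 : Gamma (((m:ℕ)+1 : ℕ) / 2 + 1) = Gamma ((m:ℝ)/2 + 1 + 1/2) := by
    push_cast; ring_nf
  have hG1 : 0 < Gamma ((m:ℝ)/2 + 1) := Gamma_pos_of_pos hm
  have hG2 : 0 < Gamma (((m:ℕ)+1 : ℕ) / 2 + 1) := by
    rw [h1]; exact Gamma_pos_of_pos (by linarith)
  rw [← mul_div_assoc, div_le_div_iff₀ hG1 hG2, mul_comm (sqrt π ^ m)]
  -- ⊢ Gamma ((m+1)/2+1) * √π^m ≤ √(m+1) * √π^(m+1) * Gamma (m/2+1)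
  have step := gamma_step ((m:ℝ)/2 + 1) hm
  rw [h1]
  have hsq : sqrt ((m:ℝ)/2 + 1) ≤ sqrt ((m:ℝ)+1) := by
    apply Real.sqrt_le_sqrt; linarith [Nat.cast_nonneg (α := ℝ) m]
  have hpi : (1:ℝ) ≤ sqrt π := by
    rw [show (1:ℝ) = sqrt 1 by simp]
    exact Real.sqrt_le_sqrt (by linarith [pi_gt_three])
  calc Gamma ((m:ℝ)/2 + 1 + 1/2) * sqrt π ^ m
      ≤ (sqrt ((m:ℝ)/2+1) * Gamma ((m:ℝ)/2+1)) * sqrt π ^ m := by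
        apply mul_le_mul_of_nonneg_right step (by positivity)
    _ ≤ (sqrt ((m:ℝ)+1) * Gamma ((m:ℝ)/2+1)) * (sqrt π * sqrt π ^ m) := by
        apply mul_le_mul (mul_le_mul_of_nonneg_right hsq hG1.le) ?_ (by positivity)
          (by positivity)
        nlinarith [pow_nonneg (Real.sqrt_nonneg π) m]
    _ = sqrt ((m:ℝ)+1) * sqrt π ^ (m+1) * Gamma ((m:ℝ)/2+1) := by ring
    _ = sqrt ((m:ℕ)+1 :ℝ) * sqrt π ^ (m+1) * Gamma ((m:ℝ)/2+1) := by norm_num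

lemma cone_eq {d : ℕ} (θ : EuclideanSpace ℝ (Fin d)) (c : ℝ → Prop)
    (hc : ∀ (r t : ℝ), 0 < r → (c (r * t) ↔ c t)) :
    Set.Ioo (0:ℝ) 1 •
        ((↑) '' {x : Metric.sphere (0 : EuclideanSpace ℝ (Fin d)) 1 |
          c ⟪(x : EuclideanSpace ℝ (Fin d)), θ⟫}) =
      {y : EuclideanSpace ℝ (Fin d) | ‖y‖ ∈ Set.Ioo (0:ℝ) 1 ∧ c ⟪y, θ⟫} := by
  ext y
  rw [Set.mem_smul]
  constructor
  · rintro ⟨r, hr, _, ⟨x, hx, rfl⟩, rfl⟩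
    have hx1 : ‖(x : EuclideanSpace ℝ (Fin d))‖ = 1 :=
      mem_sphere_zero_iff_norm.1 x.2
    constructor
    · rw [norm_smul, hx1, Real.norm_eq_abs, abs_of_pos hr.1, mul_one]; exact hr
    · rw [real_inner_smul_left]; exact (hc r _ hr.1).2 hx
  · rintro ⟨hy, hcy⟩
    have hy0 : (0:ℝ) < ‖y‖ := hy.1
    refine ⟨‖y‖, hy, ‖y‖⁻¹ • y, ⟨⟨‖y‖⁻¹ • y, mem_sphere_zero_iff_norm.2 ?_⟩, ?_, rfl⟩,
      smul_inv_smul₀ hy0.ne' y⟩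
    · rw [norm_smul, Real.norm_eq_abs, abs_of_pos (by positivity), inv_mul_cancel₀ hy0.ne']
    · show c ⟪‖y‖⁻¹ • y, θ⟫
      rw [real_inner_smul_left]
      exact (hc _ _ (by positivity)).2 hcy

lemma vol_Bm (m : ℕ) :
    (volume : Measure (Fin m → ℝ)) {w : Fin m → ℝ | ∑ i, w i ^ 2 ≤ 1} =
      ENNReal.ofReal (sqrt π ^ m / Gamma (m / 2 + 1)) := by
  rcases Nat.eq_zero_or_pos m with hm | hm
  · subst hm
    have h1 : {w : Fin 0 → ℝ | ∑ i, w i ^ 2 ≤ 1} = Set.univ := by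
      ext w; simp
    rw [h1]
    rw [MeasureTheory.volume_pi, MeasureTheory.Measure.pi_univ]
    simp [Real.Gamma_one]
  · haveI : Nonempty (Fin m) := Fin.pos_iff_nonempty.1 hm
    have e := EuclideanSpace.volume_preserving_symm_measurableEquiv_toLp (Fin m)
    have hmeas : MeasurableSet {w : Fin m → ℝ | ∑ i, w i ^ 2 ≤ 1} := by
      apply measurableSet_le (by fun_prop) measurable_const
    rw [← e.measure_preimage hmeas.nullMeasurableSet]
    have hset : (MeasurableEquiv.toLp 2 (Fin m → ℝ)).symm ⁻¹' {w | ∑ i, w i ^ 2 ≤ 1} =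
        Metric.closedBall (0 : EuclideanSpace ℝ (Fin m)) 1 := by
      ext x
      simp only [Set.mem_preimage, Metric.mem_closedBall, dist_zero_right, Set.mem_setOf_eq]
      have hx : (MeasurableEquiv.toLp 2 (Fin m → ℝ)).symm x = fun i => x i := rfl
      rw [hx]
      rw [EuclideanSpace.norm_eq, show (1:ℝ) = Real.sqrt 1 by simp,
        Real.sqrt_le_sqrt_iff (by positivity)]
      simp_rw [Real.norm_eq_abs, sq_abs, Real.sqrt_one]
    rw [hset, EuclideanSpace.volume_closedBall]
    simp

lemma sum_sq_eq {m : ℕ} (x : EuclideanSpace ℝ (Fin m)) :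
    ∑ i, x i ^ 2 = ‖x‖ ^ 2 := by
  rw [EuclideanSpace.norm_eq, Real.sq_sqrt (by positivity)]
  simp [sq_abs]

end aux

/-- Let `U` be uniformly distributed on the unit hemisphere
`{x ∈ S^{d-1} : ⟨x, θ⟩ ≥ 0}` for a fixed unit vector `θ ∈ ℝ^d` (the uniform
distribution being the surface measure conditioned on the hemisphere).  Then for
any `η ≥ 0`, `Pr(⟨U, θ⟩ ≤ η) ≤ 2√d · η`. -/
theorem hemisphere_band_measure_le (d : ℕ)
    (θ : EuclideanSpace ℝ (Fin d)) (hθ : ‖θ‖ = 1) (η : ℝ) (hη : 0 ≤ η) :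
    ((volume : Measure (EuclideanSpace ℝ (Fin d))).toSphere[|{x : Metric.sphere (0 : EuclideanSpace ℝ (Fin d)) 1 |
            0 ≤ ⟪(x : EuclideanSpace ℝ (Fin d)), θ⟫}])
      {x : Metric.sphere (0 : EuclideanSpace ℝ (Fin d)) 1 |
          ⟪(x : EuclideanSpace ℝ (Fin d)), θ⟫ ≤ η}
      ≤ ENNReal.ofReal (2 * Real.sqrt d * η) := by
  -- d ≥ 1
  obtain ⟨m, rfl⟩ : ∃ m, d = m + 1 := by
    rcases d with _ | m
    · exfalso
      rw [EuclideanSpace.norm_eq] at hθ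
      simp at hθ
    · exact ⟨m, rfl⟩
  have hE : True := trivial
  set ν := (volume : Measure (EuclideanSpace ℝ (Fin (m+1)))).toSphere with hν
  set H : Set (Metric.sphere (0:EuclideanSpace ℝ (Fin (m+1))) 1) := {x | 0 ≤ ⟪(x : EuclideanSpace ℝ (Fin (m+1))), θ⟫} with hHdef
  set B : Set (Metric.sphere (0:EuclideanSpace ℝ (Fin (m+1))) 1) := {x | ⟪(x : EuclideanSpace ℝ (Fin (m+1))), θ⟫ ≤ η} with hBdef
  have hinnerM : Measurable fun y : EuclideanSpace ℝ (Fin (m+1)) => (⟪y, θ⟫ : ℝ) :=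
    (continuous_id.inner continuous_const).measurable
  have hinnerMS : Measurable fun x : Metric.sphere (0:EuclideanSpace ℝ (Fin (m+1))) 1 => (⟪(x : EuclideanSpace ℝ (Fin (m+1))), θ⟫ : ℝ) :=
    (continuous_subtype_val.inner continuous_const).measurable
  have hH : MeasurableSet H := measurableSet_le measurable_const hinnerMS
  have hB : MeasurableSet B := measurableSet_le hinnerMS measurable_const
  rw [ProbabilityTheory.cond_apply hH]
  -- dimension
  have hdim : Module.finrank ℝ (EuclideanSpace ℝ (Fin (m+1))) = m + 1 := by
    simp [finrank_euclideanSpace]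
  -- volumes
  set Vd : ℝ := sqrt π ^ (m+1) / Gamma ((m+1 : ℕ) / 2 + 1) with hVd
  set Vm : ℝ := sqrt π ^ m / Gamma ((m : ℕ) / 2 + 1) with hVm
  have hVdpos : 0 < Vd := by
    apply div_pos (by positivity)
    exact Gamma_pos_of_pos (by positivity)
  have hVmpos : 0 < Vm := by
    apply div_pos (by positivity)
    exact Gamma_pos_of_pos (by positivity)
  have hcast : ((m:ℝ≥0∞)+1) = ENNReal.ofReal ((m:ℝ)+1) := by
    rw [show ((m:ℝ)+1) = ((m+1:ℕ):ℝ) by push_cast; ring, ENNReal.ofReal_natCast]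
    push_cast; ring
  -- upper bound on ν (H ∩ B)
  have hQ : ν (H ∩ B) ≤ (m+1 : ℝ≥0∞) * (ENNReal.ofReal η * ENNReal.ofReal Vm) := by
    obtain ⟨b, hb⟩ : ∃ b : OrthonormalBasis (Fin (m+1)) ℝ (EuclideanSpace ℝ (Fin (m+1))),
        b 0 = θ := by
      have hcard : Module.finrank ℝ (EuclideanSpace ℝ (Fin (m+1))) = Fintype.card (Fin (m+1)) := by
        simp [finrank_euclideanSpace]
      have horth : Orthonormal ℝ (Set.restrict {(0 : Fin (m+1))} (fun _ => θ)) := by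
        constructor
        · intro i
          exact hθ
        · intro i j hij
          exact absurd (Subsingleton.elim i j) hij
      obtain ⟨b, hb⟩ := horth.exists_orthonormalBasis_extension_of_card_eq hcard
      exact ⟨b, hb 0 rfl⟩
    have hrepr0 : ∀ y, b.repr y 0 = ⟪y, θ⟫ := fun y => by
      rw [OrthonormalBasis.repr_apply_apply, hb, real_inner_comm]
    set S' : Set (EuclideanSpace ℝ (Fin (m+1))) :=
      {y | b.repr y 0 ∈ Set.Icc 0 η ∧ ∑ i : Fin m, (b.repr y i.succ)^2 ≤ 1} with hS'
    have key : ∀ y : EuclideanSpace ℝ (Fin (m+1)), ‖y‖ ≤ 1 →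
        ∑ i : Fin m, (b.repr y i.succ)^2 ≤ 1 := by
      intro y hy
      have hle : ∑ i : Fin m, (b.repr y i.succ)^2 ≤ ∑ i : Fin (m+1), (b.repr y i)^2 := by
        rw [Fin.sum_univ_succ]
        nlinarith [sq_nonneg (b.repr y 0)]
      refine hle.trans ?_
      rw [sum_sq_eq, LinearIsometryEquiv.norm_map]
      nlinarith [norm_nonneg y]
    have hsub : Set.Ioo (0:ℝ) 1 • ((↑) '' (H ∩ B)) ⊆ S' := by
      intro z hz
      rw [Set.mem_smul] at hz
      obtain ⟨r, hr, w, ⟨x, hx, rfl⟩, rfl⟩ := hz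
      obtain ⟨hx0, hxη⟩ := hx
      simp only [hHdef, hBdef, Set.mem_setOf_eq] at hx0 hxη
      have hx1 : ‖(x : EuclideanSpace ℝ (Fin (m+1)))‖ = 1 := mem_sphere_zero_iff_norm.1 x.2
      constructor
      · rw [hrepr0, real_inner_smul_left]
        refine ⟨mul_nonneg hr.1.le hx0, ?_⟩
        nlinarith [mul_nonneg (sub_nonneg.2 hr.2.le) hx0]
      · refine key _ ?_
        rw [norm_smul, hx1, mul_one, Real.norm_eq_abs, abs_of_pos hr.1]
        exact hr.2.le
    set P : Set (ℝ × (Fin m → ℝ)) := Set.Icc (0:ℝ) η ×ˢ {w : Fin m → ℝ | ∑ i, w i ^ 2 ≤ 1}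
      with hPdef
    have hPm : MeasurableSet P :=
      measurableSet_Icc.prod (measurableSet_le (by fun_prop) measurable_const)
    set e₂ := MeasurableEquiv.piFinSuccAbove (fun _ : Fin (m+1) => ℝ) 0 with he₂
    set e₁ := (MeasurableEquiv.toLp 2 (Fin (m+1) → ℝ)).symm with he₁
    have hS'eq : S' = ⇑b.repr ⁻¹' (⇑e₁ ⁻¹' (⇑e₂ ⁻¹' P)) := by
      ext y
      simp only [hS', Set.mem_setOf_eq, Set.mem_preimage, hPdef, Set.mem_prod, he₂,
        MeasurableEquiv.piFinSuccAbove_apply, Fin.removeNth, Fin.zero_succAbove]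
      rfl
    have hvolS' : (volume : Measure (EuclideanSpace ℝ (Fin (m+1)))) S' =
        ENNReal.ofReal η * ENNReal.ofReal Vm := by
      have hT2 : MeasurableSet (⇑e₂ ⁻¹' P) := e₂.measurable hPm
      have hT1 : MeasurableSet (⇑e₁ ⁻¹' (⇑e₂ ⁻¹' P)) := e₁.measurable hT2
      rw [hS'eq,
        (b.measurePreserving_repr).measure_preimage hT1.nullMeasurableSet,
        (EuclideanSpace.volume_preserving_symm_measurableEquiv_toLp (Fin (m+1))).measure_preimage
          hT2.nullMeasurableSet,
        (MeasureTheory.volume_preserving_piFinSuccAbove (fun _ : Fin (m+1) => ℝ) 0).measure_preimage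
          hPm.nullMeasurableSet,
        hPdef, MeasureTheory.Measure.volume_eq_prod, MeasureTheory.Measure.prod_prod,
        Real.volume_Icc, vol_Bm, sub_zero, hVm]
    rw [hν, Measure.toSphere_apply' _ (hH.inter hB), hdim,
      show ((m+1 : ℕ) : ℝ≥0∞) = (m : ℝ≥0∞) + 1 by push_cast; ring]
    exact mul_le_mul_right ((measure_mono hsub).trans_eq hvolS') _
  -- lower bound on ν H
  have hP : (m+1 : ℝ≥0∞) * ENNReal.ofReal Vd ≤ 2 * ν H := by
    set H' : Set (Metric.sphere (0:EuclideanSpace ℝ (Fin (m+1))) 1) :=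
      {x | ⟪(x : EuclideanSpace ℝ (Fin (m+1))), θ⟫ ≤ 0} with hH'def
    have hH' : MeasurableSet H' := measurableSet_le hinnerMS measurable_const
    have e1 : Set.Ioo (0:ℝ) 1 • ((↑) '' H) =
        {y : EuclideanSpace ℝ (Fin (m+1)) | ‖y‖ ∈ Set.Ioo (0:ℝ) 1 ∧ 0 ≤ ⟪y, θ⟫} :=
      cone_eq θ (fun t => 0 ≤ t) (fun r t hr =>
        ⟨fun h => by nlinarith, fun h => mul_nonneg hr.le h⟩)
    have e2 : Set.Ioo (0:ℝ) 1 • ((↑) '' H') =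
        {y : EuclideanSpace ℝ (Fin (m+1)) | ‖y‖ ∈ Set.Ioo (0:ℝ) 1 ∧ ⟪y, θ⟫ ≤ 0} :=
      cone_eq θ (fun t => t ≤ 0) (fun r t hr =>
        ⟨fun h => by nlinarith, fun h => by nlinarith⟩)
    have hAm : MeasurableSet
        {y : EuclideanSpace ℝ (Fin (m+1)) | ‖y‖ ∈ Set.Ioo (0:ℝ) 1 ∧ 0 ≤ ⟪y, θ⟫} :=
      (measurableSet_Ioo.preimage continuous_norm.measurable).inter
        (measurableSet_le measurable_const hinnerM)
    set R := Submodule.reflection ((ℝ ∙ θ)ᗮ) with hR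
    have hRθ : R θ = -θ :=
      Submodule.reflection_mem_subspace_orthogonal_precomplement_eq_neg (Submodule.mem_span_singleton_self θ)
    have hRinner : ∀ y, ⟪R y, θ⟫ = -⟪y, θ⟫ := by
      intro y
      conv_lhs => rw [show θ = R (R θ) from (Submodule.reflection_involutive _ θ).symm]
      rw [LinearIsometryEquiv.inner_map_map, hRθ, inner_neg_right]
    have hpre : (R : _ → _) ⁻¹'
          {y : EuclideanSpace ℝ (Fin (m+1)) | ‖y‖ ∈ Set.Ioo (0:ℝ) 1 ∧ 0 ≤ ⟪y, θ⟫} =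
        {y : EuclideanSpace ℝ (Fin (m+1)) | ‖y‖ ∈ Set.Ioo (0:ℝ) 1 ∧ ⟪y, θ⟫ ≤ 0} := by
      ext y
      simp only [Set.mem_preimage, Set.mem_setOf_eq, LinearIsometryEquiv.norm_map, hRinner]
      rw [neg_nonneg]
    have hνH' : ν H' = ν H := by
      rw [hν, Measure.toSphere_apply' _ hH', Measure.toSphere_apply' _ hH]
      congr 1
      rw [e1, e2, ← hpre,
        (LinearIsometryEquiv.measurePreserving R).measure_preimage hAm.nullMeasurableSet]
    have hunion : (Set.univ : Set (Metric.sphere (0:EuclideanSpace ℝ (Fin (m+1))) 1)) = H ∪ H' := by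
      ext x
      simp only [Set.mem_univ, Set.mem_union, hHdef, hH'def, Set.mem_setOf_eq, true_iff]
      exact le_total 0 _
    have huniv : ν Set.univ = (m+1 : ℝ≥0∞) * ENNReal.ofReal Vd := by
      rw [hν, Measure.toSphere_apply_univ, hdim, EuclideanSpace.volume_ball]
      simp only [ENNReal.ofReal_one, one_pow, one_mul, Fintype.card_fin]
      rw [hVd]
      push_cast
      ring
    calc (m+1 : ℝ≥0∞) * ENNReal.ofReal Vd = ν Set.univ := huniv.symm
      _ = ν (H ∪ H') := by rw [hunion]
      _ ≤ ν H + ν H' := measure_union_le _ _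
      _ = 2 * ν H := by rw [hνH', two_mul]
  -- put together
  set g := ENNReal.ofReal (2 * Real.sqrt (m+1:ℕ) * η) with hg
  have hg' : g = ENNReal.ofReal (2 * Real.sqrt ((m:ℝ)+1) * η) := by push_cast [hg]; ring_nf
  have hkey : (2:ℝ≥0∞) * ν (H ∩ B) ≤ 2 * (g * ν H) := by
    calc (2:ℝ≥0∞) * ν (H ∩ B) ≤ 2 * ((m+1 : ℝ≥0∞) * (ENNReal.ofReal η * ENNReal.ofReal Vm)) :=
          mul_le_mul_right hQ 2
      _ = ENNReal.ofReal (2 * (((m:ℝ)+1) * (η * Vm))) := by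
          rw [ENNReal.ofReal_mul (by norm_num), ENNReal.ofReal_mul (by positivity),
            ENNReal.ofReal_mul hη, ENNReal.ofReal_ofNat, ← hcast]
      _ ≤ ENNReal.ofReal ((2 * Real.sqrt ((m:ℝ)+1) * η) * ((m+1) * Vd)) := by
          apply ENNReal.ofReal_le_ofReal
          have h1 : Vm ≤ Real.sqrt ((m:ℝ)+1) * Vd := by
            have := vol_ratio m
            rw [← hVm, ← hVd] at this
            convert this using 3 <;> push_cast <;> ring
          have hm1 : (0:ℝ) ≤ (m:ℝ) + 1 := by positivity
          nlinarith [mul_le_mul_of_nonneg_left h1 hη, Real.sqrt_nonneg ((m:ℝ)+1)]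
      _ = g * ((m+1 : ℝ≥0∞) * ENNReal.ofReal Vd) := by
          rw [hg', ENNReal.ofReal_mul
              (by nlinarith [Real.sqrt_nonneg ((m:ℝ)+1)] : (0:ℝ) ≤ 2 * Real.sqrt ((m:ℝ)+1) * η),
            ENNReal.ofReal_mul (by positivity)]
          congr 1
          rw [ENNReal.ofReal_mul (by positivity), ← hcast]
      _ ≤ g * (2 * ν H) := mul_le_mul_right hP g
      _ = 2 * (g * ν H) := by ring
  have hkey2 : ν (H ∩ B) ≤ g * ν H :=
    (ENNReal.mul_le_mul_iff_right (by norm_num) (by norm_num)).1 hkey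
  rcases eq_or_ne (ν H) 0 with h0 | h0
  · rw [h0] at hkey2
    simp only [mul_zero, nonpos_iff_eq_zero] at hkey2
    rw [hkey2]
    simp
  · have hfin : ν H ≠ ⊤ := measure_ne_top ν H
    calc (ν H)⁻¹ * ν (H ∩ B) ≤ (ν H)⁻¹ * (g * ν H) := mul_le_mul_right hkey2 _
      _ = g * ((ν H)⁻¹ * ν H) := by ring
      _ = g := by rw [ENNReal.inv_mul_cancel h0 hfin, mul_one]
end

section
/- Let X ~ Bin(n, q) with nq an integer. Then Pr(X ≤ nq) ≥ 1/2. -/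
set_option maxHeartbeats 1000000
open Real

lemma binom_pair (n m : ℕ) (h2m : n ≤ 2*m) :
    ∀ j, m+1+j ≤ n →
      n.choose (m+1+j) * m^(m+1+j) * (n-m)^(n-(m+1+j))
        ≤ n.choose (m-j) * m^(m-j) * (n-m)^(n-(m-j)) := by
  intro j
  induction j with
  | zero =>
    intro hj
    simp only [Nat.add_zero, Nat.sub_zero]
    obtain ⟨e, he⟩ : ∃ e, n = m+1+e := ⟨n - (m+1), by omega⟩
    subst he
    have h1 : m+1+e - (m+1) = e := by omega
    have h2 : m+1+e - m = e+1 := by omega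
    rw [h1, h2]
    have id1 : (m+1+e).choose (m+1) * (m+1) = (m+1+e).choose m * (e+1) := by
      have := Nat.choose_succ_right_eq (m+1+e) m
      simpa [show m+1+e-m = e+1 by omega] using this
    refine Nat.le_of_mul_le_mul_right ?_ (show 0 < m+1 by omega)
    calc (m+1+e).choose (m+1) * m ^ (m+1) * (e+1) ^ e * (m+1)
        = ((m+1+e).choose (m+1) * (m+1)) * (m ^ (m+1) * (e+1) ^ e) := by ring
      _ = ((m+1+e).choose m * (e+1)) * (m ^ (m+1) * (e+1) ^ e) := by rw [id1]
      _ = ((m+1+e).choose m * m ^ m * (e+1) ^ (e+1)) * m := by ring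
      _ ≤ ((m+1+e).choose m * m ^ m * (e+1) ^ (e+1)) * (m+1) := by
          exact Nat.mul_le_mul_left _ (by omega)
  | succ j ih =>
    intro hj
    have IH := ih (by omega)
    obtain ⟨e, he⟩ : ∃ e, n = m+2+j+e := ⟨n - (m+2+j), by omega⟩
    obtain ⟨f, hf⟩ : ∃ f, m = j+2+f := ⟨m - (j+2), by omega⟩
    set A := n - m with hA
    have hAe : A = e + j + 2 := by omega
    have hef : e ≤ f := by omega
    have s1 : m + 1 + (j+1) = m+2+j := by omega
    have s2 : n - (m+2+j) = e := by omega
    have s3 : m - (j+1) = f + 1 := by omega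
    have s5 : n - (f+1) = e + 2*j + 3 := by omega
    have s6 : n - (m+1+j) = e+1 := by omega
    have s7 : m - j = f + 2 := by omega
    have s8 : n - (f+2) = e + 2*j + 2 := by omega
    rw [s1, s2, s3, s5]
    rw [s6, s7, s8] at IH
    have id1 : n.choose (m+2+j) * (m+2+j) = n.choose (m+1+j) * (e+1) := by
      have h := Nat.choose_succ_right_eq n (m+1+j)
      rw [show m+1+j+1 = m+2+j by omega, show n-(m+1+j) = e+1 by omega] at h
      exact h
    have id2 : n.choose (f+2) * (f+2) = n.choose (f+1) * (e+2*j+3) := by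
      have := Nat.choose_succ_right_eq n (f+1)
      simpa [show n - (f+1) = e+2*j+3 by omega] using this
    have cross : (e+1)*(e+2*j+3)*m^2 ≤ (f+2)*(m+2+j)*A^2 := by
      have hAm : A ≤ m := by omega
      have hsq : A^2 ≤ m^2 := Nat.pow_le_pow_left hAm 2
      have E1 : (e+1)*(e+2*j+3)*m^2 + ((j+1)^2*m^2 + A^2*(2*m+1)) = (m+1)^2*A^2 := by
        rw [hAe, hf]; ring
      have E2 : (f+2)*(m+2+j)*A^2 + (j+1)^2*A^2 = (m+1)^2*A^2 := by
        rw [hf]; ring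
      have hle : (j+1)^2*A^2 ≤ (j+1)^2*m^2 + A^2*(2*m+1) :=
        le_add_right (Nat.mul_le_mul_left _ hsq)
      linarith [E1, E2, hle]
    refine Nat.le_of_mul_le_mul_right ?_
      (show 0 < (m+2+j)*A*(e+2*j+3)*m by
        have : 0 < A := by omega
        have : 0 < m := by omega
        positivity)
    calc n.choose (m+2+j) * m ^ (m+2+j) * A ^ e * ((m+2+j)*A*(e+2*j+3)*m)
        = (n.choose (m+2+j) * (m+2+j)) * (m ^ (m+1+j) * A ^ (e+1) * ((e+2*j+3)*m^2)) := by
          ring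
      _ = (n.choose (m+1+j) * (e+1)) * (m ^ (m+1+j) * A ^ (e+1) * ((e+2*j+3)*m^2)) := by
          rw [id1]
      _ = (n.choose (m+1+j) * m ^ (m+1+j) * A ^ (e+1)) * ((e+1)*(e+2*j+3)*m^2) := by ring
      _ ≤ (n.choose (f+2) * m ^ (f+2) * A ^ (e+2*j+2)) * ((f+2)*(m+2+j)*A^2) :=
          Nat.mul_le_mul IH cross
      _ = (n.choose (f+2) * (f+2)) * (m ^ (f+2) * A ^ (e+2*j+2) * ((m+2+j)*A^2)) := by ring
      _ = (n.choose (f+1) * (e+2*j+3)) * (m ^ (f+2) * A ^ (e+2*j+2) * ((m+2+j)*A^2)) := by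
          rw [id2]
      _ = n.choose (f+1) * m ^ (f+1) * A ^ (e+2*j+3) * ((m+2+j)*A*(e+2*j+3)*m) := by ring

lemma nat_discrete (n m : ℕ) (hmn : m ≤ n) (h2m : n ≤ 2*m) :
    n^n ≤ 2 * ∑ k ∈ Finset.range (m+1), n.choose k * m^k * (n-m)^(n-k) := by
  set T : ℕ → ℕ := fun k => n.choose k * m^k * (n-m)^(n-k) with hT
  have htot : ∑ k ∈ Finset.range (n+1), T k = n^n := by
    have h := add_pow m (n-m) n
    rw [show m + (n-m) = n by omega] at h
    rw [h]
    exact Finset.sum_congr rfl (fun k _ => by rw [hT]; push_cast; ring)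
  have hsplit : ∑ k ∈ Finset.range (m+1), T k + ∑ k ∈ Finset.Ico (m+1) (n+1), T k
      = ∑ k ∈ Finset.range (n+1), T k :=
    Finset.sum_range_add_sum_Ico T (by omega)
  have hre : ∑ k ∈ Finset.Ico (m+1) (n+1), T k = ∑ j ∈ Finset.range (n-m), T (m+1+j) := by
    rw [Finset.sum_Ico_eq_sum_range, show n+1-(m+1) = n-m from by omega]
  have hpair : ∑ j ∈ Finset.range (n-m), T (m+1+j) ≤ ∑ j ∈ Finset.range (n-m), T (m-j) := by
    refine Finset.sum_le_sum (fun j hj => ?_)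
    rw [Finset.mem_range] at hj
    exact binom_pair n m h2m j (by omega)
  have hinj : ∀ x ∈ Finset.range (n-m), ∀ y ∈ Finset.range (n-m),
      m - x = m - y → x = y := by
    intro x hx y hy hxy
    rw [Finset.mem_range] at hx hy
    omega
  have himg : ∑ j ∈ Finset.range (n-m), T (m-j)
      = ∑ k ∈ (Finset.range (n-m)).image (fun j => m - j), T k :=
    (Finset.sum_image hinj).symm
  have hsub : ∑ k ∈ (Finset.range (n-m)).image (fun j => m - j), T k
      ≤ ∑ k ∈ Finset.range (m+1), T k := by
    refine Finset.sum_le_sum_of_subset ?_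
    intro k hk
    simp only [Finset.mem_image, Finset.mem_range] at hk ⊢
    omega
  calc n^n = ∑ k ∈ Finset.range (n+1), T k := htot.symm
    _ = ∑ k ∈ Finset.range (m+1), T k + ∑ k ∈ Finset.Ico (m+1) (n+1), T k := hsplit.symm
    _ ≤ ∑ k ∈ Finset.range (m+1), T k + ∑ k ∈ Finset.range (m+1), T k := by
        have h2 := hre ▸ (hpair.trans (himg ▸ hsub))
        omega
    _ = 2 * ∑ k ∈ Finset.range (m+1), T k := by ring

lemma real_discrete (n m : ℕ) (hmn : m ≤ n) (h2m : n ≤ 2*m) (hn : 0 < n) :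
    (1/2:ℝ) ≤ ∑ k ∈ Finset.range (m+1),
      (n.choose k : ℝ) * ((m:ℝ)/n)^k * (1 - (m:ℝ)/n)^(n-k) := by
  have hn' : (0:ℝ) < n := by exact_mod_cast hn
  have h1p : 1 - (m:ℝ)/n = ((n-m : ℕ) : ℝ)/n := by
    rw [Nat.cast_sub hmn]
    field_simp
  have hterm : ∀ k ∈ Finset.range (m+1),
      (n.choose k : ℝ) * ((m:ℝ)/n)^k * (1 - (m:ℝ)/n)^(n-k)
        = ((n.choose k * m^k * (n-m)^(n-k) : ℕ) : ℝ) / n^n := by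
    intro k hk
    simp only [Finset.mem_range] at hk
    have hnn : ((n:ℝ))^k * (n:ℝ)^(n-k) = (n:ℝ)^n := by
      rw [← pow_add]; congr 1; omega
    rw [h1p, div_pow, div_pow]
    push_cast
    rw [mul_assoc, div_mul_div_comm, ← hnn]
    ring
  rw [Finset.sum_congr rfl hterm, ← Finset.sum_div]
  rw [le_div_iff₀ (by positivity)]
  have h := nat_discrete n m hmn h2m
  have h2 : (n^n : ℝ) ≤ 2 * ((∑ k ∈ Finset.range (m+1), n.choose k * m^k * (n-m)^(n-k) : ℕ) : ℝ) := by
    exact_mod_cast h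
  push_cast at h2 ⊢
  linarith

lemma log_scale_ineq (k s : ℝ) (hk0 : 0 ≤ k) (hk1 : k ≤ 1) (hs0 : 0 ≤ s) (hs1 : s < 1) :
    Real.log (1+k*s) - Real.log (1-k*s) ≤ k * (Real.log (1+s) - Real.log (1-s)) := by
  set W : ℝ → ℝ := fun t => k * (Real.log (1+t) - Real.log (1-t))
      - (Real.log (1+k*t) - Real.log (1-k*t)) with hW
  have hmem : ∀ t ∈ Set.Icc (0:ℝ) s, 0 < 1 + t ∧ 0 < 1 - t ∧ 0 < 1 + k*t ∧ 0 < 1 - k*t := by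
    intro t ht
    obtain ⟨ht0, hts⟩ := ht
    have hkt : k*t ≤ t := by nlinarith
    have : 0 ≤ k*t := by positivity
    refine ⟨by linarith, by linarith, by linarith, by linarith⟩
  have hderiv : ∀ t ∈ Set.Ioo (0:ℝ) s, HasDerivAt W
      (k * (1/(1+t) + 1/(1-t)) - (k/(1+k*t) + k/(1-k*t))) t := by
    intro t ht
    have h := hmem t ⟨le_of_lt ht.1, le_of_lt ht.2⟩
    have h1 : HasDerivAt (fun t : ℝ => Real.log (1+t)) (1/(1+t)) t := by
      simpa using (((hasDerivAt_id t).const_add 1).log h.1.ne')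
    have h2 : HasDerivAt (fun t : ℝ => Real.log (1-t)) (-1/(1-t)) t := by
      simpa using (((hasDerivAt_id t).const_sub 1).log h.2.1.ne')
    have h3 : HasDerivAt (fun t : ℝ => Real.log (1+k*t)) (k/(1+k*t)) t := by
      simpa using ((((hasDerivAt_id t).const_mul k).const_add 1).log h.2.2.1.ne')
    have h4 : HasDerivAt (fun t : ℝ => Real.log (1-k*t)) (-k/(1-k*t)) t := by
      simpa using ((((hasDerivAt_id t).const_mul k).const_sub 1).log h.2.2.2.ne')
    have := (((h1.sub h2).const_mul k).sub (h3.sub h4))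
    convert this using 1
    · rfl
    · rfl
    · rfl
    ring
  have hmono : MonotoneOn W (Set.Icc 0 s) := by
    apply monotoneOn_of_deriv_nonneg (convex_Icc 0 s)
    · -- continuity
      apply ContinuousOn.sub
      · apply ContinuousOn.mul continuousOn_const
        apply ContinuousOn.sub
        · exact ContinuousOn.log (by fun_prop) (fun t ht => (hmem t ht).1.ne')
        · exact ContinuousOn.log (by fun_prop) (fun t ht => (hmem t ht).2.1.ne')
      · apply ContinuousOn.sub
        · exact ContinuousOn.log (by fun_prop) (fun t ht => (hmem t ht).2.2.1.ne')
        · exact ContinuousOn.log (by fun_prop) (fun t ht => (hmem t ht).2.2.2.ne')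
    · rw [interior_Icc]
      intro t ht
      exact (hderiv t ht).differentiableAt.differentiableWithinAt
    · rw [interior_Icc]
      intro t ht
      rw [(hderiv t ht).deriv]
      have h := hmem t ⟨le_of_lt ht.1, le_of_lt ht.2⟩
      obtain ⟨ha, hb, hc, hd⟩ := h
      have key : 1/(1+k*t) + 1/(1-k*t) ≤ 1/(1+t) + 1/(1-t) := by
        rw [div_add_div _ _ ha.ne' hb.ne', div_add_div _ _ hc.ne' hd.ne']
        have e1 : (1-t)+(1+t) = 2 := by ring
        have e2 : (1-k*t)+(1+k*t) = 2 := by ring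
        rw [div_le_div_iff₀ (by positivity) (by positivity)]
        nlinarith [mul_nonneg (mul_nonneg (sub_nonneg.2 hk1) (by linarith : (0:ℝ) ≤ 1+k)) (sq_nonneg t)]
      have expand : k * (1/(1+t)+1/(1-t)) - (k/(1+k*t) + k/(1-k*t))
          = k * ((1/(1+t)+1/(1-t)) - (1/(1+k*t)+1/(1-k*t))) := by ring
      rw [expand]
      exact mul_nonneg hk0 (by linarith)
  have h0 : W 0 = 0 := by simp [hW]
  have hs : 0 ≤ W s := by
    rw [← h0]
    exact hmono ⟨le_refl 0, hs0⟩ ⟨hs0, le_refl s⟩ hs0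
  rw [hW] at hs
  simp only at hs
  linarith

lemma pointwise_refl (n m : ℕ) (hm : 1 ≤ m) (h2m : 2*m < n) (v : ℝ)
    (hv0 : 0 ≤ v) (hvc : v ≤ (m:ℝ)/n) :
    ((m:ℝ)/n - v)^m * (1 - (m:ℝ)/n + v)^(n-1-m)
      ≤ ((m:ℝ)/n + v)^m * (1 - (m:ℝ)/n - v)^(n-1-m) := by
  have hn : (0:ℝ) < n := by
    have : 0 < n := by omega
    positivity
  set c : ℝ := (m:ℝ)/n with hc
  set d : ℝ := 1 - c with hd
  set e : ℕ := n - 1 - m with he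
  have hc0 : 0 < c := by
    rw [hc]
    have : (0:ℝ) < m := by exact_mod_cast hm
    positivity
  have h2c : 2*c < 1 := by
    rw [hc, ← sub_pos]
    have hmn : (2*(m:ℝ)) < n := by exact_mod_cast h2m
    field_simp
    linarith
  have hcd : c < d := by rw [hd]; linarith
  have hd0 : 0 < d := lt_trans hc0 hcd
  have goal_eq1 : 1 - c + v = d + v := by rw [hd]
  have goal_eq2 : 1 - c - v = d - v := by rw [hd]
  rw [goal_eq1, goal_eq2]
  rcases eq_or_lt_of_le hvc with hveq | hvlt
  · -- v = c
    rw [hveq]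
    simp only [sub_self]
    rw [zero_pow (by omega)]
    have : (0:ℝ) ≤ (c + c)^m * (d - c)^e := by
      apply mul_nonneg (by positivity)
      apply pow_nonneg
      linarith
    linarith [this]
  · -- all bases positive
    have b1 : 0 < c - v := by linarith
    have b2 : 0 < c + v := by linarith
    have b3 : 0 < d - v := by linarith
    have b4 : 0 < d + v := by linarith
    rw [← Real.log_le_log_iff (by positivity) (by positivity)]
    rw [Real.log_mul (by positivity) (by positivity), Real.log_mul (by positivity) (by positivity),
      Real.log_pow, Real.log_pow, Real.log_pow, Real.log_pow]
    -- key application of log_scale_ineq with k = c/d, s = v/c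
    have hk0 : 0 ≤ c/d := by positivity
    have hk1 : c/d ≤ 1 := by
      rw [div_le_one hd0]; linarith
    have hs0 : 0 ≤ v/c := by positivity
    have hs1 : v/c < 1 := by rw [div_lt_one hc0]; exact hvlt
    have K := log_scale_ineq (c/d) (v/c) hk0 hk1 hs0 hs1
    have id1 : 1 + (c/d)*(v/c) = (d+v)/d := by
      field_simp
      try ring
    have id2 : 1 - (c/d)*(v/c) = (d-v)/d := by
      field_simp
      try ring
    have id3 : (1:ℝ) + v/c = (c+v)/c := by
      field_simp
      try ring
    have id4 : (1:ℝ) - v/c = (c-v)/c := by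
      field_simp
      try ring
    rw [id1, id2, id3, id4, Real.log_div b4.ne' hd0.ne', Real.log_div b3.ne' hd0.ne',
      Real.log_div b2.ne' hc0.ne', Real.log_div b1.ne' hc0.ne'] at K
    -- K : log(d+v) - log d - (log(d-v) - log d) ≤ c/d * (log(c+v) - log c - (log(c-v) - log c))
    have hΔ : 0 ≤ Real.log (c+v) - Real.log (c-v) := by
      have := Real.log_le_log b1 (by linarith : c - v ≤ c + v)
      linarith
    have hec : (e:ℝ) * (c/d) ≤ m := by
      have hecast : (e:ℝ) = (n:ℝ) - 1 - m := by
        rw [he, Nat.sub_sub, Nat.cast_sub (by omega : 1 + m ≤ n)]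
        push_cast
        ring
      have hrw : (e:ℝ) * (c/d) = ((e:ℝ)*c)/d := by ring
      rw [hrw, div_le_iff₀ hd0, hecast, hc, hd, hc]
      have hmr : (0:ℝ) ≤ m := by positivity
      have hmn : (m:ℝ) ≤ n := by
        have : (m:ℕ) ≤ n := by omega
        exact_mod_cast this
      have hX : (n:ℝ)*((m:ℝ)/n) = m := by field_simp
      nlinarith [hX, hmr, hmn, hn, (show (0:ℝ) ≤ (m:ℝ)/n by positivity)]
    have step1 : (e:ℝ) * (Real.log (d+v) - Real.log (d-v))
        ≤ (e:ℝ) * ((c/d) * (Real.log (c+v) - Real.log (c-v))) := by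
      apply mul_le_mul_of_nonneg_left _ (by positivity)
      linarith
    have step2 : (e:ℝ) * ((c/d) * (Real.log (c+v) - Real.log (c-v)))
        ≤ (m:ℝ) * (Real.log (c+v) - Real.log (c-v)) := by
      rw [← mul_assoc]
      exact mul_le_mul_of_nonneg_right hec hΔ
    linarith

lemma term_deriv (n : ℕ) (k : ℕ) (hk : k < n) (x : ℝ) :
    HasDerivAt (fun y : ℝ => (n.choose k : ℝ) * y^k * (1-y)^(n-k))
      ((if k = 0 then 0 else (n:ℝ) * ((n-1).choose (k-1)) * x^(k-1) * (1-x)^(n-1-(k-1)))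
        - (n:ℝ) * ((n-1).choose k) * x^k * (1-x)^(n-1-k)) x := by
  have hq : HasDerivAt (fun y : ℝ => (1-y)^(n-k))
      (↑(n-k) * (1-x)^(n-k-1) * (-1)) x := ((hasDerivAt_id x).const_sub 1).pow _
  have hp : HasDerivAt (fun y : ℝ => y^k) (↑k * x^(k-1)) x := hasDerivAt_pow k x
  have h := (hp.mul hq).const_mul ((n.choose k : ℝ))
  convert h using 1
  · rfl
  · rfl
  · ext y; rw [Pi.mul_apply]; ring
  · rcases Nat.eq_zero_or_pos k with hk0 | hk0
    · subst hk0
      have hc : ((n - 0 : ℕ):ℝ) = (n:ℝ) := by norm_num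
      simp only [if_pos rfl, Nat.choose_zero_right, Nat.cast_one, Nat.sub_zero, pow_zero,
        Nat.zero_sub, Nat.cast_zero, zero_mul, mul_one, one_mul, zero_sub, hc]
      simp
    · rw [if_neg (by omega)]
      have id1 : (n.choose k : ℝ) * k = (n:ℝ) * ((n-1).choose (k-1)) := by
        have h := Nat.add_one_mul_choose_eq (n-1) (k-1)
        rw [(show n - 1 + 1 = n by omega), (show k - 1 + 1 = k by omega)] at h
        exact_mod_cast h.symm
      have id2 : (n.choose k : ℝ) * ((n-k:ℕ)) = (n:ℝ) * ((n-1).choose k) := by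
        have h1 := Nat.choose_succ_right_eq n k
        have h2 := Nat.add_one_mul_choose_eq (n-1) k
        rw [(show n - 1 + 1 = n by omega)] at h2
        have := h2.trans h1
        exact_mod_cast this.symm
      have ep1 : x^k = x^(k-1) * x := by
        conv_lhs => rw [show k = (k-1)+1 by omega]
        rw [pow_succ]
      have ep2 : (1-x)^(n-k) = (1-x)^(n-1-k) * (1-x) := by
        conv_lhs => rw [show n - k = (n-1-k)+1 by omega]
        rw [pow_succ]
      rw [show n - 1 - (k-1) = n - k by omega]
      rw [← mul_assoc, ← mul_assoc, ← id1, ← id2]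
      rw [show n - k - 1 = n - 1 - k by omega]
      rw [ep1, ep2]
      ring

lemma telescope (G : ℕ → ℝ) (m : ℕ) :
    ∑ k ∈ Finset.range (m+1), ((if k = 0 then 0 else G (k-1)) - G k) = -(G m) := by
  induction m with
  | zero => simp
  | succ j ih =>
    rw [Finset.sum_range_succ, ih, if_neg (by omega)]
    simp only [Nat.add_sub_cancel]
    ring

noncomputable def Fb (n m : ℕ) : ℝ → ℝ :=
  fun x => ∑ k ∈ Finset.range (m+1), (n.choose k : ℝ) * x^k * (1-x)^(n-k)

lemma Fb_deriv (n m : ℕ) (hmn : m < n) (x : ℝ) :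
    HasDerivAt (Fb n m) (-((n:ℝ) * ((n-1).choose m) * x^m * (1-x)^(n-1-m))) x := by
  have h : HasDerivAt (Fb n m)
      (∑ k ∈ Finset.range (m+1),
        ((if k = 0 then 0 else (n:ℝ) * ((n-1).choose (k-1)) * x^(k-1) * (1-x)^(n-1-(k-1)))
          - (n:ℝ) * ((n-1).choose k) * x^k * (1-x)^(n-1-k))) x := by
    apply HasDerivAt.fun_sum
    intro k hkmem
    rw [Finset.mem_range] at hkmem
    exact term_deriv n k (by omega) x
  convert h using 1
  exact (telescope (fun k => (n:ℝ) * ((n-1).choose k) * x^k * (1-x)^(n-1-k)) m).symm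

lemma Fb_zero (n m : ℕ) : Fb n m 0 = 1 := by
  rw [Fb]
  rw [Finset.sum_eq_single 0]
  · simp
  · intro k hk hk0
    rw [zero_pow hk0]
    ring
  · intro h
    simp at h

lemma Fb_one (n m : ℕ) (hmn : m < n) : Fb n m 1 = 0 := by
  rw [Fb]
  apply Finset.sum_eq_zero
  intro k hk
  rw [Finset.mem_range] at hk
  rw [sub_self, zero_pow (by omega)]
  ring

lemma real_calc (n m : ℕ) (hm : 1 ≤ m) (h2m : 2*m < n) :
    (1/2:ℝ) ≤ ∑ k ∈ Finset.range (m+1),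
      (n.choose k : ℝ) * ((m:ℝ)/n)^k * (1 - (m:ℝ)/n)^(n-k) := by
  have hmn : m < n := by omega
  have hn0 : 0 < n := by omega
  have hn : (0:ℝ) < n := by exact_mod_cast hn0
  set c : ℝ := (m:ℝ)/n with hc
  have hc0 : 0 < c := by
    rw [hc]; have : (0:ℝ) < m := by exact_mod_cast hm
    positivity
  have h2c : 2*c < 1 := by
    rw [hc, ← sub_pos]
    have h2r : (2*(m:ℝ)) < n := by exact_mod_cast h2m
    have heq : 1 - 2*((m:ℝ)/n) = ((n:ℝ) - 2*m)/n := by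
      field_simp
      try ring
    rw [heq]
    exact div_pos (by linarith) hn
  set f : ℝ → ℝ := fun x => x^m * (1-x)^(n-1-m) with hf
  set CC : ℝ := (n:ℝ) * ((n-1).choose m) with hCC
  have hCC0 : 0 ≤ CC := by rw [hCC]; positivity
  have hf_cont : Continuous f := by rw [hf]; fun_prop
  have hD_cont : Continuous (fun x : ℝ => -((n:ℝ) * ((n-1).choose m) * x^m * (1-x)^(n-1-m))) := by
    fun_prop
  have hFTC : ∀ a b : ℝ, (Fb n m) b - (Fb n m) a
      = ∫ y in a..b, -((n:ℝ) * ((n-1).choose m) * y^m * (1-y)^(n-1-m)) := by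
    intro a b
    rw [intervalIntegral.integral_eq_sub_of_hasDerivAt
      (fun x _ => Fb_deriv n m hmn x) ((hD_cont).intervalIntegrable a b)]
  have hDf : ∀ a b : ℝ, (∫ y in a..b, -((n:ℝ) * ((n-1).choose m) * y^m * (1-y)^(n-1-m)))
      = -(CC * ∫ y in a..b, f y) := by
    intro a b
    rw [← intervalIntegral.integral_const_mul, ← intervalIntegral.integral_neg]
    congr 1
    ext y
    rw [hf, hCC]
    ring
  -- the two integrals
  have key : (∫ y in (0:ℝ)..c, f y) ≤ ∫ y in c..(1:ℝ), f y := by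
    have hint : ∀ a b : ℝ, IntervalIntegrable f MeasureTheory.volume a b :=
      fun a b => hf_cont.intervalIntegrable a b
    have hsplit : (∫ y in c..(2*c), f y) + (∫ y in (2*c)..(1:ℝ), f y) = ∫ y in c..(1:ℝ), f y :=
      intervalIntegral.integral_add_adjacent_intervals (hint _ _) (hint _ _)
    have htail : 0 ≤ ∫ y in (2*c)..(1:ℝ), f y := by
      apply intervalIntegral.integral_nonneg (by linarith)
      intro u hu
      rw [hf]
      simp only
      apply mul_nonneg (pow_nonneg (by linarith [hu.1, hc0]) _)
        (pow_nonneg (by linarith [hu.2]) _)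
    have hrefl : (∫ y in c..(2*c), f y) = ∫ y in (0:ℝ)..c, f (2*c - y) := by
      rw [intervalIntegral.integral_comp_sub_left f (2*c), show 2*c - c = c by ring,
        show 2*c - (0:ℝ) = 2*c by ring]
    have hmono : (∫ y in (0:ℝ)..c, f y) ≤ ∫ y in (0:ℝ)..c, f (2*c - y) := by
      apply intervalIntegral.integral_mono_on (le_of_lt hc0) (hint _ _)
        ((hf_cont.comp (by fun_prop)).intervalIntegrable _ _)
      intro u hu
      have hv0 : 0 ≤ c - u := by linarith [hu.2]
      have hvc : c - u ≤ c := by linarith [hu.1]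
      have hpt := pointwise_refl n m hm h2m (c - u) hv0 (by rw [← hc]; exact hvc)
      rw [← hc] at hpt
      rw [show c - (c-u) = u by ring, show 1 - c + (c-u) = 1 - u by ring,
        show c + (c-u) = 2*c - u by ring, show 1 - c - (c-u) = 1 - (2*c-u) by ring] at hpt
      show u^m * (1-u)^(n-1-m) ≤ (2*c-u)^m * (1-(2*c-u))^(n-1-m)
      exact hpt
    linarith
  -- assemble
  have h01 := hFTC 0 1
  rw [Fb_one n m hmn, Fb_zero, hDf] at h01
  have h0c := hFTC 0 c
  rw [Fb_zero, hDf] at h0c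
  have hsplit2 : (∫ y in (0:ℝ)..c, f y) + (∫ y in c..(1:ℝ), f y) = ∫ y in (0:ℝ)..(1:ℝ), f y :=
    intervalIntegral.integral_add_adjacent_intervals
      (hf_cont.intervalIntegrable _ _) (hf_cont.intervalIntegrable _ _)
  have hXY : CC * (∫ y in (0:ℝ)..c, f y) ≤ CC * ∫ y in c..(1:ℝ), f y :=
    mul_le_mul_of_nonneg_left key hCC0
  have hFbc : Fb n m c = 1 - CC * ∫ y in (0:ℝ)..c, f y := by linarith
  have hsum_eq : Fb n m c = ∑ k ∈ Finset.range (m+1),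
      (n.choose k : ℝ) * c^k * (1-c)^(n-k) := rfl
  rw [← hsum_eq]
  have hone : CC * ((∫ y in (0:ℝ)..c, f y) + ∫ y in c..(1:ℝ), f y) = 1 := by
    rw [hsplit2]
    nlinarith [h01]
  nlinarith [hXY, hFbc, hone]

lemma real_main (n m : ℕ) (hmn : m ≤ n) (hn : 0 < n) :
    (1/2:ℝ) ≤ ∑ k ∈ Finset.range (m+1),
      (n.choose k : ℝ) * ((m:ℝ)/n)^k * (1 - (m:ℝ)/n)^(n-k) := by
  rcases Nat.eq_zero_or_pos m with hm0 | hm1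
  · subst hm0
    simp
    norm_num
  · rcases le_or_gt n (2*m) with h | h
    · exact real_discrete n m hmn h hn
    · exact real_calc n m hm1 h

/-- If `X ~ Bin(n, q)` with `n·q` an integer `m`, then `Pr(X ≤ m) ≥ 1/2`
(an integer mean of a binomial is a median). -/
theorem binomial_le_mean_ge_half (q : ENNReal) (hq : q ≤ 1) (n m : ℕ)
    (hm : (m : ENNReal) = n * q) :
    (1 / 2 : ENNReal) ≤ (PMF.binomial q.toNNReal (by simpa using ENNReal.toNNReal_mono ENNReal.one_ne_top hq) n).toMeasure {k | (k : ℕ) ≤ m} := by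
  rcases Nat.eq_zero_or_pos n with hn0 | hn
  · subst hn0
    have hset : {k : Fin 1 | (k : ℕ) ≤ m} = Set.univ := by
      ext k
      simp [Fin.eq_zero k]
    rw [hset, MeasureTheory.measure_univ]
    exact ENNReal.half_le_self
  · have hqt : q ≠ ⊤ := fun ht => by simp [ht] at hq
    have hnne : (n : ENNReal) ≠ 0 := by
      simp only [ne_eq, Nat.cast_eq_zero]; omega
    have hntop : (n : ENNReal) ≠ ⊤ := ENNReal.natCast_ne_top n
    have hmn : m ≤ n := by
      have h1 : (m : ENNReal) ≤ n := by
        rw [hm]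
        calc (n:ENNReal) * q ≤ n * 1 := mul_le_mul_right hq _
          _ = n := mul_one _
      exact_mod_cast h1
    have hnR : (0:ℝ) < n := by exact_mod_cast hn
    set p : ℝ := (m:ℝ)/n with hp
    have hp0 : 0 ≤ p := by positivity
    have hp1 : p ≤ 1 := by
      rw [hp, div_le_one hnR]
      exact_mod_cast hmn
    have hqe : q = ENNReal.ofReal p := by
      have h1 : q = (m : ENNReal)/n := (ENNReal.eq_div_iff hnne hntop).mpr hm.symm
      rw [h1, hp, ENNReal.ofReal_div_of_pos hnR, ENNReal.ofReal_natCast, ENNReal.ofReal_natCast]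
    have h1q : 1 - q = ENNReal.ofReal (1 - p) := by
      rw [hqe, ← ENNReal.ofReal_one, ← ENNReal.ofReal_sub _ hp0]
    rw [PMF.toMeasure_apply_fintype]
    have hind : ∀ x : Fin (n+1), ({k : Fin (n+1) | (k : ℕ) ≤ m}).indicator
        (⇑(PMF.binomial q.toNNReal (by simpa using ENNReal.toNNReal_mono ENNReal.one_ne_top hq) n)) x
        = if (x:ℕ) ≤ m then q^(x:ℕ) * (1-q)^(n-(x:ℕ)) * ((n.choose (x:ℕ) : ℕ) : ENNReal)
          else 0 := by
      intro x
      rw [Set.indicator_apply]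
      simp only [Set.mem_setOf_eq]
      split_ifs with hx
      · exact (PMF.binomial_apply _ _ n x).trans (by rw [Fin.val_last, ENNReal.coe_toNNReal hqt])
      · rfl
    rw [Finset.sum_congr rfl (fun x _ => hind x)]
    rw [Fin.sum_univ_eq_sum_range
      (fun i => if i ≤ m then q^i * (1-q)^(n-i) * ((n.choose i : ℕ) : ENNReal) else 0)]
    rw [← Finset.sum_filter]
    have hfil : (Finset.range (n+1)).filter (· ≤ m) = Finset.range (m+1) := by
      ext i
      simp only [Finset.mem_filter, Finset.mem_range]
      omega
    rw [hfil]
    have hterm : ∀ i ∈ Finset.range (m+1),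
        q^i * (1-q)^(n-i) * ((n.choose i : ℕ) : ENNReal)
          = ENNReal.ofReal ((n.choose i : ℝ) * p^i * (1-p)^(n-i)) := by
      intro i _
      rw [h1q, hqe, ← ENNReal.ofReal_pow hp0, ← ENNReal.ofReal_pow (by linarith),
        ← ENNReal.ofReal_natCast (n.choose i), ← ENNReal.ofReal_mul (pow_nonneg hp0 i),
        ← ENNReal.ofReal_mul (mul_nonneg (pow_nonneg hp0 i) (pow_nonneg (by linarith) (n-i)))]
      congr 1
      ring
    rw [Finset.sum_congr rfl hterm, ← ENNReal.ofReal_sum_of_nonneg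
      (fun i _ => mul_nonneg (mul_nonneg (Nat.cast_nonneg _) (pow_nonneg hp0 i))
        (pow_nonneg (by linarith) (n-i)))]
    have hhalf : (1/2 : ENNReal) = ENNReal.ofReal (1/2 : ℝ) := by
      rw [ENNReal.ofReal_div_of_pos (by norm_num), ENNReal.ofReal_one]
      norm_num
    rw [hhalf]
    exact ENNReal.ofReal_le_ofReal (real_main n m hmn hn)
end
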